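/- For a graph with constant (uniform) node labels and every i ≥ 1, the walk labeling κ^{(i)} and the extended-connectivity labeling ec^{(i)} are equivalent: κ^{(i)}(u) = κ^{(i)}(v) if and only if ec^{(i)}(u) = ec^{(i)}(v). -/

import Mathlib

open Finset

/-- A walk represented as a vertex function with consecutive vertices adjacent. -/
def IsWalk {V : Type*} (G : SimpleGraph V) {i : ℕ} (f : Fin (i+1) → V) : Prop :=
  ∀ j : Fin i, G.Adj (f j.castSucc) (f j.succ)

/-- Walks of length `i` in `G`. -/
abbrev WalkLen {V : Type*} (G : SimpleGraph V) (i : ℕ) : Type _ :=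
  { f : Fin (i+1) → V // IsWalk G f }

/-- Walks of length `i` in `G` starting at `v`. -/
abbrev WalkFrom {V : Type*} (G : SimpleGraph V) (v : V) (i : ℕ) : Type _ :=
  { f : Fin (i+1) → V // f 0 = v ∧ IsWalk G f }

noncomputable instance {V : Type*} (G : SimpleGraph V) [Fintype V] (i : ℕ) :
    Fintype (WalkLen G i) := Fintype.ofFinite _

noncomputable instance {V : Type*} (G : SimpleGraph V) [Fintype V] (v : V) (i : ℕ) :
    Fintype (WalkFrom G v i) := Fintype.ofFinite _

/-- Label sequence of a walk. -/
def lseq {V S : Type*} (lab : V → S) {i : ℕ} (f : Fin (i+1) → V) : List S :=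
  List.ofFn (lab ∘ f)

/-- κ^{(i)}(v): multiset of label sequences of walks of length exactly i from v. -/
noncomputable def kappa {V S : Type*} (G : SimpleGraph V) [Fintype V] (lab : V → S)
    (i : ℕ) (v : V) : Multiset (List S) :=
  (Finset.univ : Finset (WalkFrom G v i)).val.map fun w => lseq lab w.1

/-- κ₊^{(ℓ)}(v): multiset of label sequences of walks of length at most ℓ from v. -/
noncomputable def kappaPlus {V S : Type*} (G : SimpleGraph V) [Fintype V] (lab : V → S)
    (ℓ : ℕ) (v : V) : Multiset (List S) :=
  ∑ i ∈ Finset.range (ℓ+1), kappa G lab i v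

/-- The type of Weisfeiler-Leman labels after i iterations. -/
def WLL (S : Type*) : ℕ → Type _
  | 0 => S
  | (i+1) => WLL S i × Multiset (WLL S i)

/-- Weisfeiler-Leman refinement. -/
def wl {V S : Type*} (G : SimpleGraph V) [Fintype V] [DecidableRel G.Adj] (lab : V → S) :
    (i : ℕ) → V → WLL S i
  | 0, v => lab v
  | (i+1), v => (wl G lab i v, (G.neighborFinset v).val.map (wl G lab i))

/-- Morgan's extended connectivity. -/
def ec {V : Type*} (G : SimpleGraph V) [Fintype V] [DecidableRel G.Adj] : ℕ → V → ℕ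
  | 0, _ => 1
  | (i+1), v => ∑ u ∈ G.neighborFinset v, ec G i u

/-- Vertices of the direct product graph: pairs with matching labels. -/
abbrev ProdVert {V W S : Type*} (labG : V → S) (labH : W → S) : Type _ :=
  { p : V × W // labG p.1 = labH p.2 }

/-- The direct product graph of two labeled graphs. -/
def prodGraph {V W S : Type*} (G : SimpleGraph V) (H : SimpleGraph W)
    (labG : V → S) (labH : W → S) : SimpleGraph (ProdVert labG labH) where
  Adj p q := G.Adj p.1.1 q.1.1 ∧ H.Adj p.1.2 q.1.2
  symm := ⟨fun _ _ h => ⟨h.1.symm, h.2.symm⟩⟩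
  loopless := ⟨fun _ h => G.loopless.irrefl _ h.1⟩

open Classical in
/-- k_i(u,v): pairs of length-i walks from u and v with matching label sequences. -/
noncomputable def kwalk {V W S : Type*} (G : SimpleGraph V) (H : SimpleGraph W)
    [Fintype V] [Fintype W] (labG : V → S) (labH : W → S) (i : ℕ) (u : V) (v : W) : ℕ :=
  ∑ w : WalkFrom G u i, ∑ w' : WalkFrom H v i,
    ∏ j : Fin (i+1), if labG (w.1 j) = labH (w'.1 j) then 1 else 0



noncomputable def walkFromSuccEquiv {V : Type*} (G : SimpleGraph V) [Fintype V]
    [DecidableRel G.Adj] (v : V) (i : ℕ) :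
    WalkFrom G v (i+1) ≃ Σ u : G.neighborFinset v, WalkFrom G (u : V) i where
  toFun w := ⟨⟨w.1 1, by
      rw [SimpleGraph.mem_neighborFinset]
      have h := w.2.2 0
      simpa [w.2.1, Fin.succ_zero_eq_one] using h⟩,
    ⟨Fin.tail w.1, by simp [Fin.tail, Fin.succ_zero_eq_one], fun j => by
      have h := w.2.2 j.succ
      show G.Adj (w.1 j.castSucc.succ) (w.1 j.succ.succ)
      simpa only [Fin.succ_castSucc] using h⟩⟩
  invFun p := ⟨Fin.cons v p.2.1, by simp, fun j => by
    induction j using Fin.cases with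
    | zero =>
        have : G.Adj v (p.1 : V) := (SimpleGraph.mem_neighborFinset _ _ _).mp p.1.2
        simpa [Fin.succ_zero_eq_one, p.2.2.1, show ((0:Fin (i+1)).succ) = 1 from rfl,
          Fin.cons_succ] using this
    | succ k =>
        have h := p.2.2.2 k
        simpa [← Fin.succ_castSucc, Fin.cons_succ] using h⟩
  left_inv w := Subtype.ext (by
    funext j
    induction j using Fin.cases with
    | zero => simp [w.2.1]
    | succ k => simp [Fin.cons_succ, Fin.tail])
  right_inv p := by
    rcases p with ⟨⟨u, hu⟩, g, hg0, hgw⟩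
    have h1 : (Fin.cons v g : Fin (i+2) → V) 1 = u := by
      rw [show (1 : Fin (i+2)) = Fin.succ 0 from rfl, Fin.cons_succ, hg0]
    refine Sigma.ext (Subtype.ext h1) ?_
    rw [Subtype.heq_iff_coe_eq (fun f => by simp [h1])]
    simp

lemma card_walkFrom {V : Type*} [Fintype V] (G : SimpleGraph V) [DecidableRel G.Adj]
    (i : ℕ) : ∀ v : V, Fintype.card (WalkFrom G v i) = ec G i v := by
  induction i with
  | zero =>
      intro v
      have : Unique (WalkFrom G v 0) :=
        { default := ⟨fun _ => v, rfl, fun j => j.elim0⟩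
          uniq := fun w => Subtype.ext (funext fun j => by
            have hj : j = 0 := Fin.ext (Nat.lt_one_iff.mp j.isLt)
            rw [hj, w.2.1]) }
      rw [Fintype.card_unique, ec]
  | succ i ih =>
      intro v
      rw [Fintype.card_congr (walkFromSuccEquiv G v i), Fintype.card_sigma, ec]
      simp only [ih]
      exact Finset.sum_coe_sort _ _

lemma kappa_eq_replicate {V S : Type*} [Fintype V] (G : SimpleGraph V) [DecidableRel G.Adj]
    (lab : V → S) (hlab : ∀ u v : V, lab u = lab v) (i : ℕ) (u v : V) :
    kappa G lab i v
      = Multiset.replicate (ec G i v) (List.ofFn fun _ : Fin (i+1) => lab u) := by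
  unfold kappa
  have h : ∀ w : WalkFrom G v i, lseq lab w.1 = List.ofFn (fun _ : Fin (i+1) => lab u) := by
    intro w; unfold lseq; congr 1; funext j; exact hlab _ _
  rw [Multiset.map_congr rfl (fun w _ => h w), Multiset.map_const']
  congr 1
  rw [← card_walkFrom G i v]
  rfl

/-- for uniform labels, κ^{(i)} and ec^{(i)} are equivalent labelings. -/
theorem stmt_5 {V S : Type*} [Fintype V] (G : SimpleGraph V) [DecidableRel G.Adj]
    (lab : V → S) (hlab : ∀ u v : V, lab u = lab v)
    (i : ℕ) (hi : 1 ≤ i) (u v : V) :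
    kappa G lab i u = kappa G lab i v ↔ ec G i u = ec G i v := by
  rw [kappa_eq_replicate G lab hlab i u u, kappa_eq_replicate G lab hlab i u v]
  constructor
  · intro h
    simpa using congrArg Multiset.card h
  · intro h; rw [h]
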